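/- Let X : ℝ → ℝ² be a twice continuously differentiable curve with ‖X'(s)‖ = 1 for all s, let a < b and r > 0, and suppose that the normal map Φ(s,t) = X(s) + t·R(X'(s)) is injective on [a,b] × (−r, r). Then the curvature is bounded by the reciprocal of the tubular radius: ‖X''(s)‖ ≤ 1/r for every s ∈ [a,b]. (The fact, used by the paper, that the tubular-neighborhood radius r satisfies r ≤ 1/κ, where κ is the maximum curvature.) -/

import Mathlib

/-- Rotation by 90 degrees in the Euclidean plane: `R(a₁, a₂) = (-a₂, a₁)`. -/
noncomputable def rot (a : EuclideanSpace ℝ (Fin 2)) : EuclideanSpace ℝ (Fin 2) :=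
  (WithLp.equiv 2 (Fin 2 → ℝ)).symm ![-a 1, a 0]

local notation "⟪" x ", " y "⟫" => @inner ℝ _ _ x y

lemma rot_apply0 (a : EuclideanSpace ℝ (Fin 2)) : rot a 0 = -a 1 := rfl

lemma rot_apply1 (a : EuclideanSpace ℝ (Fin 2)) : rot a 1 = a 0 := rfl

lemma inner_rot_self (a : EuclideanSpace ℝ (Fin 2)) : ⟪a, rot a⟫ = 0 := by
  simp [PiLp.inner_apply, Fin.sum_univ_two, rot_apply0, rot_apply1]
  ring

lemma norm_rot (a : EuclideanSpace ℝ (Fin 2)) : ‖rot a‖ = ‖a‖ := by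
  simp [EuclideanSpace.norm_eq, Fin.sum_univ_two, rot_apply0, rot_apply1]
  ring_nf

lemma decomp (e v : EuclideanSpace ℝ (Fin 2)) (he : ‖e‖ = 1) :
    v = ⟪v, e⟫ • e + ⟪v, rot e⟫ • rot e := by
  have h : e 0 * e 0 + e 1 * e 1 = 1 := by
    have h2 := real_inner_self_eq_norm_sq e
    rw [he] at h2
    simp only [PiLp.inner_apply, Fin.sum_univ_two, RCLike.inner_apply, conj_trivial] at h2
    linear_combination h2
  ext i
  fin_cases i
  · show v _ = _
    simp only [PiLp.inner_apply, Fin.sum_univ_two, PiLp.add_apply,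
      PiLp.smul_apply, smul_eq_mul, RCLike.inner_apply, conj_trivial, Fin.mk_zero, Fin.mk_one,
      rot_apply0, rot_apply1]
    linear_combination (-(v 0)) * h
  · show v _ = _
    simp only [PiLp.inner_apply, Fin.sum_univ_two, PiLp.add_apply,
      PiLp.smul_apply, smul_eq_mul, RCLike.inner_apply, conj_trivial, Fin.mk_zero, Fin.mk_one,
      rot_apply0, rot_apply1]
    linear_combination (-(v 1)) * h

/-- The tubular-neighborhood radius bounds the curvature: if the normal map of
a unit-speed `C²` curve is injective on `[a,b] × (-r,r)`, then the curvature
satisfies `‖X''(s)‖ ≤ 1/r` on `[a,b]` (i.e. `r ≤ 1/κ`). -/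
theorem stmt6 (X : ℝ → EuclideanSpace ℝ (Fin 2))
    (hX : ContDiff ℝ 2 X) (hunit : ∀ s : ℝ, ‖deriv X s‖ = 1)
    (a b r : ℝ) (hab : a < b) (hr : 0 < r)
    (hinj : Set.InjOn (fun p : ℝ × ℝ => X p.1 + p.2 • rot (deriv X p.1))
      (Set.Icc a b ×ˢ Set.Ioo (-r) r)) :
    ∀ s ∈ Set.Icc a b, ‖deriv (deriv X) s‖ ≤ 1 / r := by
  intro s₀ hs₀
  by_contra hcon
  push_neg at hcon
  set T := deriv X with hTdef
  set A := deriv T with hAdef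
  -- differentiability
  have hXd : Differentiable ℝ X ∧ Differentiable ℝ T := by
    have h : ContDiff ℝ ((1:ℕ)+1) X := by exact_mod_cast hX
    rw [contDiff_succ_iff_deriv] at h
    exact ⟨h.1, h.2.2.differentiable (by simp)⟩
  have hDX : ∀ s, HasDerivAt X (T s) s := fun s => (hXd.1 s).hasDerivAt
  have hDT : ∀ s, HasDerivAt T (A s) s := fun s => (hXd.2 s).hasDerivAt
  have hTT : ∀ s, ⟪T s, T s⟫ = 1 := fun s => by
    rw [real_inner_self_eq_norm_sq, hunit s]; norm_num
  -- A s₀ ⟂ T s₀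
  have hATorth : ⟪A s₀, T s₀⟫ = 0 := by
    have hD : HasDerivAt (fun s => ⟪T s, T s⟫) (⟪T s₀, A s₀⟫ + ⟪A s₀, T s₀⟫) s₀ :=
      (hDT s₀).inner ℝ (hDT s₀)
    have hD' : HasDerivAt (fun _ : ℝ => (1:ℝ)) (⟪T s₀, A s₀⟫ + ⟪A s₀, T s₀⟫) s₀ := by
      convert hD using 1
      funext s; rw [hTT s]
    have h0 := hD'.deriv
    rw [deriv_const] at h0
    have hc := real_inner_comm (A s₀) (T s₀)
    linarith
  set N₀ := rot (T s₀) with hN₀def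
  have hN₀ : ‖N₀‖ = 1 := by rw [hN₀def, norm_rot]; exact hunit s₀
  set k := ⟪A s₀, N₀⟫ with hkdef
  have hdecompA : A s₀ = k • N₀ := by
    have h := decomp (T s₀) (A s₀) (hunit s₀)
    rw [hATorth, zero_smul, zero_add] at h
    exact h
  have hknorm : |k| = ‖A s₀‖ := by
    rw [hdecompA, norm_smul, hN₀, mul_one, Real.norm_eq_abs]
  have hk : 1/r < |k| := by rw [hknorm]; exact hcon
  have hkpos : (0:ℝ) < |k| := lt_trans (by positivity) hk
  have h1kr : 1/|k| < r := by
    rw [div_lt_iff₀ hkpos]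
    have h' := (div_lt_iff₀ hr).mp hk
    nlinarith
  set σ : ℝ := if 0 ≤ k then 1 else -1 with hσdef
  have hσk : σ * k = |k| := by
    by_cases h : 0 ≤ k
    · simp [hσdef, h, abs_of_nonneg h]
    · push_neg at h
      simp [hσdef, not_le.mpr h, abs_of_neg h]
  have hσ1 : |σ| = 1 := by
    by_cases h : 0 ≤ k <;> simp [hσdef, h]
  set ν := σ • N₀ with hνdef
  have hνnorm : ‖ν‖ = 1 := by
    rw [hνdef, norm_smul, hN₀, mul_one, Real.norm_eq_abs, hσ1]
  have hinnerνA : ⟪ν, A s₀⟫ = |k| := by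
    rw [hνdef, hdecompA, real_inner_smul_left, real_inner_smul_right,
      real_inner_self_eq_norm_sq, hN₀]
    rw [← hσk]; ring
  have hinnerνT : ⟪ν, T s₀⟫ = 0 := by
    rw [hνdef, real_inner_smul_left, real_inner_comm, hN₀def, inner_rot_self, mul_zero]
  set u := (1/|k| + r)/2 with hudef
  have h1ku : 1/|k| < u := by rw [hudef]; linarith
  have huR : u < r := by rw [hudef]; linarith
  have hu0 : 0 < u := lt_trans (by positivity) h1ku
  have huk : 1 < u * |k| := by
    rw [div_lt_iff₀ hkpos] at h1ku; linarith
  -- the function g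
  set g : ℝ → ℝ → ℝ := fun t s => ⟪X s₀ + t • ν - X s, T s⟫ with hgdef
  have hgs₀ : ∀ t, g t s₀ = 0 := by
    intro t
    simp only [hgdef, add_sub_cancel_left, real_inner_smul_left, hinnerνT, mul_zero]
  have hgderiv : ∀ t, HasDerivAt (g t) (-1 + t * |k|) s₀ := by
    intro t
    have h1 : HasDerivAt (fun s => X s₀ + t • ν - X s) (0 - T s₀) s₀ :=
      (hasDerivAt_const s₀ (X s₀ + t • ν)).sub (hDX s₀)
    have h2 := h1.inner ℝ (hDT s₀)
    have h3 : ⟪X s₀ + t • ν - X s₀, A s₀⟫ + ⟪0 - T s₀, T s₀⟫ = -1 + t * |k| := by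
      rw [add_sub_cancel_left, real_inner_smul_left, hinnerνA, zero_sub,
        inner_neg_left, hTT s₀]
      ring
    rw [h3] at h2
    exact h2
  -- eventual sign facts near s₀
  have hslope_u : Filter.Tendsto (slope (g u) s₀) (nhdsWithin s₀ {s₀}ᶜ) (nhds (-1 + u * |k|)) :=
    hasDerivAt_iff_tendsto_slope.mp (hgderiv u)
  have hslope_0 : Filter.Tendsto (slope (g 0) s₀) (nhdsWithin s₀ {s₀}ᶜ) (nhds (-1 + 0 * |k|)) :=
    hasDerivAt_iff_tendsto_slope.mp (hgderiv 0)
  have hev1 : ∀ᶠ y in nhdsWithin s₀ {s₀}ᶜ, 0 < slope (g u) s₀ y :=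
    hslope_u.eventually (lt_mem_nhds (by linarith))
  have hev2 : ∀ᶠ y in nhdsWithin s₀ {s₀}ᶜ, slope (g 0) s₀ y < 0 :=
    hslope_0.eventually (gt_mem_nhds (by norm_num))
  have hru : (0:ℝ) < r - u := by linarith
  have hev3 : ∀ᶠ y in nhdsWithin s₀ {s₀}ᶜ, ‖X y - X s₀‖ < r - u := by
    apply Filter.Eventually.filter_mono nhdsWithin_le_nhds
    have hc : Filter.Tendsto (fun y => ‖X y - X s₀‖) (nhds s₀) (nhds ‖X s₀ - X s₀‖) := by
      exact ((hXd.1.continuous.tendsto s₀).sub tendsto_const_nhds).norm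
    rw [sub_self, norm_zero] at hc
    exact hc.eventually (gt_mem_nhds hru)
  have hev := (hev1.and hev2).and hev3
  -- choose s₁ on an appropriate side of s₀
  have hkey : ∃ s₁, s₁ ∈ Set.Icc a b ∧ s₁ ≠ s₀ ∧ ‖X s₁ - X s₀‖ < r - u ∧
      ((g 0 s₁ < 0 ∧ 0 < g u s₁) ∨ (g u s₁ < 0 ∧ 0 < g 0 s₁)) := by
    rcases lt_or_eq_of_le hs₀.2 with hlt | heqb
    · -- s₀ < b : approach from the right
      have hmono : nhdsWithin s₀ (Set.Ioi s₀) ≤ nhdsWithin s₀ {s₀}ᶜ :=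
        nhdsWithin_mono s₀ (fun y hy => ne_of_gt hy)
      have hmem : ∀ᶠ y in nhdsWithin s₀ (Set.Ioi s₀), y ∈ Set.Ioc s₀ b :=
        Ioc_mem_nhdsGT_of_mem ⟨le_refl s₀, hlt⟩
      obtain ⟨s₁, ⟨⟨h1, h2⟩, h3⟩, h4⟩ := ((hev.filter_mono hmono).and hmem).exists
      have hpos : 0 < s₁ - s₀ := by simp [Set.mem_Ioc] at h4; linarith [h4.1]
      refine ⟨s₁, ⟨le_trans hs₀.1 (le_of_lt h4.1), h4.2⟩, ne_of_gt h4.1, h3, Or.inl ⟨?_, ?_⟩⟩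
      · have := h2
        rw [slope_def_field, div_lt_iff₀ hpos] at this
        · rw [hgs₀ 0] at this; simpa using this
      · have := h1
        rw [slope_def_field, lt_div_iff₀ hpos] at this
        · rw [hgs₀ u] at this; simpa using this
    · -- s₀ = b : approach from the left (a < b = s₀)
      have halt : a < s₀ := heqb ▸ hab
      have hmono : nhdsWithin s₀ (Set.Iio s₀) ≤ nhdsWithin s₀ {s₀}ᶜ :=
        nhdsWithin_mono s₀ (fun y hy => ne_of_lt hy)
      have hmem : ∀ᶠ y in nhdsWithin s₀ (Set.Iio s₀), y ∈ Set.Ico a s₀ :=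
        Ico_mem_nhdsLT_of_mem ⟨halt, le_refl s₀⟩
      obtain ⟨s₁, ⟨⟨h1, h2⟩, h3⟩, h4⟩ := ((hev.filter_mono hmono).and hmem).exists
      have hneg : s₁ - s₀ < 0 := by simp [Set.mem_Ico] at h4; linarith [h4.2]
      refine ⟨s₁, ⟨h4.1, le_trans (le_of_lt h4.2) hs₀.2⟩, ne_of_lt h4.2, h3, Or.inr ⟨?_, ?_⟩⟩
      · have h1' := h1
        rw [slope_def_field] at h1'
        rcases div_pos_iff.mp h1' with ⟨hn, hd⟩ | ⟨hn, hd⟩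
        · linarith
        · have h0' := hgs₀ u; linarith
      · have h2' := h2
        rw [slope_def_field] at h2'
        rcases div_neg_iff.mp h2' with ⟨hn, hd⟩ | ⟨hn, hd⟩
        · have h0' := hgs₀ 0; linarith
        · linarith
  obtain ⟨s₁, hs₁ab, hs₁ne, hs₁close, hsigns⟩ := hkey
  -- IVT in t
  have hHcont : Continuous (fun t => g t s₁) := by
    have hfe : (fun t => g t s₁) =
        fun t => ⟪X s₀ - X s₁, T s₁⟫ + t * ⟪ν, T s₁⟫ := by
      funext t
      simp only [hgdef]
      rw [show X s₀ + t • ν - X s₁ = (X s₀ - X s₁) + t • ν from by abel,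
        inner_add_left, real_inner_smul_left]
    rw [hfe]
    exact continuous_const.add (continuous_id.mul continuous_const)
  have hIVT : ∃ t₀ ∈ Set.Ioo (0:ℝ) u, g t₀ s₁ = 0 := by
    rcases hsigns with ⟨hg0, hgu⟩ | ⟨hgu, hg0⟩
    · have := intermediate_value_Ioo (le_of_lt hu0) hHcont.continuousOn
      have h0mem : (0:ℝ) ∈ Set.Ioo (g 0 s₁) (g u s₁) := ⟨hg0, hgu⟩
      obtain ⟨t₀, ht₀, hval⟩ := this h0mem
      exact ⟨t₀, ht₀, hval⟩
    · have := intermediate_value_Ioo' (le_of_lt hu0) hHcont.continuousOn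
      have h0mem : (0:ℝ) ∈ Set.Ioo (g u s₁) (g 0 s₁) := ⟨hgu, hg0⟩
      obtain ⟨t₀, ht₀, hval⟩ := this h0mem
      exact ⟨t₀, ht₀, hval⟩
  obtain ⟨t₀, ⟨ht₀pos, ht₀u⟩, ht₀val⟩ := hIVT
  -- the collision point
  set p := X s₀ + t₀ • ν with hpdef
  set β := ⟪p - X s₁, rot (T s₁)⟫ with hβdef
  have hdec := decomp (T s₁) (p - X s₁) (hunit s₁)
  have hfirst : ⟪p - X s₁, T s₁⟫ = 0 := ht₀val
  rw [hfirst, zero_smul, zero_add] at hdec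
  have hpeq : p = X s₁ + β • rot (T s₁) := by
    rw [← hβdef] at hdec
    rw [← hdec]; abel
  have hnormp : ‖p - X s₁‖ < r := by
    have : p - X s₁ = (X s₀ - X s₁) + t₀ • ν := by rw [hpdef]; abel
    rw [this]
    calc ‖(X s₀ - X s₁) + t₀ • ν‖ ≤ ‖X s₀ - X s₁‖ + ‖t₀ • ν‖ := norm_add_le _ _
      _ = ‖X s₀ - X s₁‖ + |t₀| := by rw [norm_smul, hνnorm, mul_one, Real.norm_eq_abs]
      _ < (r - u) + u := by
          have h1 : ‖X s₀ - X s₁‖ = ‖X s₁ - X s₀‖ := by rw [norm_sub_rev]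
          have h2 : |t₀| = t₀ := abs_of_pos ht₀pos
          rw [h1, h2]; exact add_lt_add hs₁close ht₀u
      _ = r := by ring
  have hβr : |β| < r := by
    calc |β| ≤ ‖p - X s₁‖ * ‖rot (T s₁)‖ := abs_real_inner_le_norm _ _
      _ = ‖p - X s₁‖ := by rw [norm_rot, hunit s₁, mul_one]
      _ < r := hnormp
  have htσr : |t₀ * σ| < r := by
    rw [abs_mul, hσ1, mul_one, abs_of_pos ht₀pos]
    exact lt_trans ht₀u huR
  -- apply injectivity
  have hmem1 : ((s₀, t₀ * σ) : ℝ × ℝ) ∈ Set.Icc a b ×ˢ Set.Ioo (-r) r := by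
    refine ⟨hs₀, ?_⟩
    rw [Set.mem_Ioo, ← abs_lt]; exact htσr
  have hmem2 : ((s₁, β) : ℝ × ℝ) ∈ Set.Icc a b ×ˢ Set.Ioo (-r) r := by
    refine ⟨hs₁ab, ?_⟩
    rw [Set.mem_Ioo, ← abs_lt]; exact hβr
  have himg : X s₀ + (t₀ * σ) • rot (T s₀) = X s₁ + β • rot (T s₁) := by
    rw [← hpeq, hpdef, hνdef, smul_smul]
  have := hinj hmem1 hmem2 himg
  exact hs₁ne (congrArg Prod.fst this).symm
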